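/- For positive integers m ≤ n, the number of integers j with 1 ≤ j ≤ n and gcd(j,m) = 1 is greater than (φ(m)/m)·n − √n. -/

import Mathlib

section Aux
open Finset ArithmeticFunction
open scoped ArithmeticFunction.Moebius


lemma sum_moeb (n : ℕ) : ∑ d ∈ n.divisors, μ d = if n = 1 then 1 else 0 := by
  have := congrArg (fun f : ArithmeticFunction ℤ => f n) moebius_mul_coe_zeta
  simp only [coe_mul_zeta_apply, one_apply] at this
  exact this

lemma legendre (m N : ℕ) (hm : 0 < m) :
    (((Finset.Ioc 0 N).filter (fun j => Nat.gcd j m = 1)).card : ℤ)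
      = ∑ d ∈ m.divisors, μ d * ((N / d : ℕ) : ℤ) := by
  rw [Finset.card_filter]
  simp only [Nat.cast_sum, apply_ite (Nat.cast : ℕ → ℤ), Nat.cast_one, Nat.cast_zero]
  have step1 : ∀ j ∈ Finset.Ioc 0 N,
      (if Nat.gcd j m = 1 then (1:ℤ) else 0) = ∑ d ∈ m.divisors, if d ∣ j then μ d else 0 := by
    intro j hj
    have hj0 : 0 < j := (Finset.mem_Ioc.mp hj).1
    have hg : (Nat.gcd j m).divisors = m.divisors.filter (fun d => d ∣ j) := by
      ext d
      simp only [Nat.mem_divisors, Finset.mem_filter]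
      constructor
      · rintro ⟨hd, -⟩
        exact ⟨⟨hd.trans (Nat.gcd_dvd_right _ _), hm.ne'⟩, hd.trans (Nat.gcd_dvd_left _ _)⟩
      · rintro ⟨⟨hdm, -⟩, hdj⟩
        exact ⟨Nat.dvd_gcd hdj hdm, Nat.gcd_ne_zero_right hm.ne'⟩
    rw [← sum_moeb, hg, Finset.sum_filter]
  rw [Finset.sum_congr rfl step1, Finset.sum_comm]
  refine Finset.sum_congr rfl fun d hd => ?_
  rw [← Finset.sum_filter, Finset.sum_const, ← Nat.Ioc_filter_dvd_card_eq_div N d]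
  simp [mul_comm]


lemma tot_moeb (m : ℕ) (hm : 0 < m) :
    ∑ d ∈ m.divisors, μ d * ((m / d : ℕ) : ℤ) = (Nat.totient m : ℤ) := by
  have h : ∀ n : ℕ, n > 0 → ∑ i ∈ n.divisors, ((Nat.totient i : ℤ)) = (n : ℤ) := by
    intro n hn
    exact_mod_cast congrArg (Nat.cast (R := ℤ)) (Nat.sum_totient n)
  have := (sum_eq_iff_sum_mul_moebius_eq (R := ℤ)
      (f := fun i => (Nat.totient i : ℤ)) (g := fun n => (n : ℤ))).mp h m hm
  simp only [Int.cast_id] at this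
  rw [← this, Nat.sum_divisorsAntidiagonal (f := fun d e => (μ d : ℤ) * (e : ℤ))]


lemma prod_primes_ge (P : Finset ℕ) (hP : ∀ p ∈ P, Nat.Prime p) :
    4 ^ (P.card - 1) ≤ ∏ p ∈ P, p := by
  induction P using Finset.induction_on_max with
  | empty => simp
  | insert a s ha ih =>
    have hprime : ∀ p ∈ s, Nat.Prime p := fun p hp => hP p (Finset.mem_insert_of_mem hp)
    have hans : a ∉ s := fun h => lt_irrefl a (ha a h)
    rw [Finset.prod_insert hans, Finset.card_insert_of_notMem hans]
    have hih := ih hprime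
    have ha2 : 2 ≤ a := (hP a (Finset.mem_insert_self a s)).two_le
    rcases Nat.lt_or_ge s.card 2 with hc | hc
    · interval_cases h : s.card
      · have hs : s = ∅ := Finset.card_eq_zero.mp h
        subst hs
        simpa using le_trans (by norm_num) ha2
      · obtain ⟨p, hp⟩ := Finset.card_eq_one.mp h
        have hp2 : 2 ≤ p := (hprime p (by simp [hp])).two_le
        have hap : p < a := ha p (by simp [hp])
        have h3 : 3 ≤ a := by omega
        rw [hp, Finset.prod_singleton]
        calc 4 ^ (1 + 1 - 1) = 4 := by norm_num
        _ ≤ 3 * 2 := by norm_num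
        _ ≤ a * p := Nat.mul_le_mul h3 hp2
    · have h3 : ∃ p ∈ s, 3 ≤ p := by
        by_contra hcon
        push_neg at hcon
        have h2 : ∀ p ∈ s, p = 2 := fun p hp => by
          have := (hprime p hp).two_le; have := hcon p hp; omega
        have hsub : s ⊆ {2} := fun p hp => by simp [h2 p hp]
        have := Finset.card_le_card hsub
        simp at this; omega
      obtain ⟨p, hps, hp3⟩ := h3
      have hap : p < a := ha p hps
      have ha5 : 4 ≤ a := by omega
      calc 4 ^ (s.card + 1 - 1) = 4 * 4 ^ (s.card - 1) := by
            rw [Nat.add_sub_cancel, ← pow_succ']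
            congr 1; omega
      _ ≤ a * ∏ p ∈ s, p := Nat.mul_le_mul ha5 hih


lemma card_moeb_one_le (m : ℕ) (hm : 0 < m) :
    ((m.divisors.filter (fun d => μ d = 1)).card) ≤ 2 ^ (m.primeFactors.card - 1) := by
  rcases eq_or_lt_of_le (Nat.succ_le_of_lt hm) with h1 | h1
  · have : m = 1 := h1.symm
    subst this
    calc (Nat.divisors 1 |>.filter (fun d => μ d = 1)).card ≤ (Nat.divisors 1).card :=
          Finset.card_filter_le _ _
    _ ≤ 2 ^ ((Nat.primeFactors 1).card - 1) := by simp [Nat.divisors_one]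
  -- m ≥ 2
  set p := m.minFac with hpdef
  have hp : p.Prime := Nat.minFac_prime (by omega)
  have hpm : p ∣ m := Nat.minFac_dvd m
  set E := m.divisors.filter (fun d => μ d = 1) with hE
  set O := m.divisors.filter (fun d => μ d = -1) with hO
  -- injection E → O
  have hEO : E.card ≤ O.card := by
    apply Finset.card_le_card_of_injOn (fun d => if p ∣ d then d / p else d * p)
    · intro d hd
      simp only [Finset.mem_coe, hE, Finset.mem_filter, Nat.mem_divisors] at hd
      obtain ⟨⟨hdm, -⟩, hμ⟩ := hd
      have hsq : Squarefree d := moebius_ne_zero_iff_squarefree.mp (by rw [hμ]; norm_num)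
      by_cases hpd : p ∣ d
      · simp only [Finset.mem_coe, hO, if_pos hpd, Finset.mem_filter, Nat.mem_divisors]
        obtain ⟨e, he⟩ := hpd
        have he' : d / p = e := by rw [he]; exact Nat.mul_div_cancel_left e hp.pos
        have hcop : Nat.Coprime p e := by
          have := hsq
          rw [he, Nat.squarefree_mul_iff] at this
          exact this.1
        have hμmul : μ d = μ p * μ e := by
          rw [he]; exact (isMultiplicative_moebius.map_mul_of_coprime hcop)
        rw [moebius_apply_prime hp] at hμmul
        refine ⟨⟨?_, hm.ne'⟩, ?_⟩
        · rw [he']; exact dvd_trans ⟨p, by rw [he]; ring⟩ hdm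
        · rw [he']; omega
      · simp only [Finset.mem_coe, hO, if_neg hpd, Finset.mem_filter, Nat.mem_divisors]
        have hcop : Nat.Coprime d p := (hp.coprime_iff_not_dvd.mpr hpd).symm
        have hμmul : μ (d * p) = μ d * μ p := isMultiplicative_moebius.map_mul_of_coprime hcop
        rw [moebius_apply_prime hp, hμ] at hμmul
        exact ⟨⟨hcop.mul_dvd_of_dvd_of_dvd hdm hpm, hm.ne'⟩, by omega⟩
    · intro d1 h1' d2 h2' heq
      simp only [hE, Finset.coe_filter, Set.mem_setOf_eq, Nat.mem_divisors] at h1' h2'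
      have hsq1 : Squarefree d1 := moebius_ne_zero_iff_squarefree.mp (by rw [h1'.2]; norm_num)
      have hsq2 : Squarefree d2 := moebius_ne_zero_iff_squarefree.mp (by rw [h2'.2]; norm_num)
      by_cases c1 : p ∣ d1 <;> by_cases c2 : p ∣ d2 <;> simp only [c1, c2, if_pos, if_neg, if_true, if_false] at heq
      · obtain ⟨e1, he1⟩ := c1
        obtain ⟨e2, he2⟩ := c2
        rw [he1, he2, Nat.mul_div_cancel_left _ hp.pos, Nat.mul_div_cancel_left _ hp.pos] at heq
        rw [he1, he2, heq]
      · -- d1/p = d2*p, so p*p ∣ d1, contradiction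
        exfalso
        obtain ⟨e1, he1⟩ := c1
        rw [he1, Nat.mul_div_cancel_left _ hp.pos] at heq
        have : p * p ∣ d1 := by rw [he1, heq]; exact ⟨d2, by ring⟩
        exact hp.not_isUnit (hsq1 p this)
      · exfalso
        obtain ⟨e2, he2⟩ := c2
        rw [he2, Nat.mul_div_cancel_left _ hp.pos] at heq
        have : p * p ∣ d2 := by rw [he2, ← heq]; exact ⟨d1, by ring⟩
        exact hp.not_isUnit (hsq2 p this)
      · exact Nat.eq_of_mul_eq_mul_right hp.pos heq
  -- E ∪ O injects into powerset of primeFactors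
  have hdisj : Disjoint E O := by
    rw [Finset.disjoint_filter]
    intro d _ h1' h2'
    omega
  have hcard : (E ∪ O).card ≤ 2 ^ m.primeFactors.card := by
    have : (E ∪ O).card ≤ m.primeFactors.powerset.card := by
      apply Finset.card_le_card_of_injOn (fun d => d.primeFactors)
      · intro d hd
        simp only [Finset.mem_coe, Finset.mem_union, hE, hO, Finset.mem_filter, Nat.mem_divisors] at hd
        have hdm : d ∣ m := by rcases hd with h | h; exacts [h.1.1, h.1.1]
        exact Finset.mem_powerset.mpr (Nat.primeFactors_mono hdm hm.ne')
      · intro d1 h1' d2 h2' heq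
        simp only [Finset.coe_union, Set.mem_union, hE, hO, Finset.coe_filter,
          Set.mem_setOf_eq, Nat.mem_divisors] at h1' h2'
        have hsq1 : Squarefree d1 := by
          apply moebius_ne_zero_iff_squarefree.mp
          rcases h1' with h | h <;> rw [h.2] <;> norm_num
        have hsq2 : Squarefree d2 := by
          apply moebius_ne_zero_iff_squarefree.mp
          rcases h2' with h | h <;> rw [h.2] <;> norm_num
        rw [← Nat.prod_primeFactors_of_squarefree hsq1, ← Nat.prod_primeFactors_of_squarefree hsq2]
        simp only at heq
        rw [heq]
    simpa [Finset.card_powerset] using this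
  rw [Finset.card_union_of_disjoint hdisj] at hcard
  have hk : 1 ≤ m.primeFactors.card := by
    rw [Nat.one_le_iff_ne_zero]
    simp only [ne_eq, Finset.card_eq_zero]
    intro h
    rw [Nat.primeFactors_eq_empty] at h
    omega
  have : 2 * E.card ≤ 2 ^ m.primeFactors.card := by omega
  have h2 : 2 ^ m.primeFactors.card = 2 * 2 ^ (m.primeFactors.card - 1) := by
    rw [← pow_succ']
    congr 1
    omega
  omega

theorem stmt_2 (m n : ℕ) (hm : 0 < m) (hmn : m ≤ n) :
    (((Finset.Icc 1 n).filter (fun j => Nat.gcd j m = 1)).card : ℝ)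
      > (Nat.totient m : ℝ) / m * n - Real.sqrt n := by
  have hn : 0 < n := lt_of_lt_of_le hm hmn
  have hm0 : (m:ℝ) ≠ 0 := Nat.cast_ne_zero.mpr hm.ne'
  set k := m.primeFactors.card with hk
  set E := m.divisors.filter (fun d => μ d = 1) with hEdef
  -- count as real möbius sum
  have hIcc : Finset.Icc 1 n = Finset.Ioc 0 n := rfl
  have hcount : (((Finset.Icc 1 n).filter (fun j => Nat.gcd j m = 1)).card : ℝ)
      = ∑ d ∈ m.divisors, (μ d : ℝ) * ((n / d : ℕ) : ℝ) := by
    rw [hIcc]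
    have h := congrArg (Int.cast : ℤ → ℝ) (legendre m n hm)
    push_cast at h
    exact h
  -- per-term lower bound
  have key : ∀ d ∈ m.divisors,
      (μ d : ℝ) * ((m / d : ℕ) : ℝ) * n / m - (if μ d = 1 ∧ d ≠ 1 then (1:ℝ) else 0)
        ≤ (μ d : ℝ) * ((n / d : ℕ) : ℝ) := by
    intro d hd
    obtain ⟨hdm, -⟩ := Nat.mem_divisors.mp hd
    have hd0 : 0 < d := Nat.pos_of_dvd_of_pos hdm hm
    have hd0' : (d:ℝ) ≠ 0 := Nat.cast_ne_zero.mpr hd0.ne'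
    have hMd : ((m / d : ℕ) : ℝ) = (m:ℝ) / d := Nat.cast_div hdm hd0'
    have hexact : (μ d : ℝ) * ((m / d : ℕ) : ℝ) * n / m = (μ d : ℝ) * ((n:ℝ) / d) := by
      rw [hMd]; field_simp
    have hA1 : ((n / d : ℕ) : ℝ) ≤ (n:ℝ) / d := Nat.cast_div_le
    have hA2 : (n:ℝ) / d - 1 < ((n / d : ℕ) : ℝ) := by
      have h1 : (n:ℕ) < (n / d + 1) * d := by
        have h := Nat.div_add_mod n d
        have h2 := Nat.mod_lt n hd0
        calc n = d * (n / d) + n % d := h.symm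
        _ < d * (n / d) + d := by omega
        _ = (n / d + 1) * d := by ring
      have h2 : (n:ℝ) < (((n / d : ℕ) : ℝ) + 1) * d := by exact_mod_cast h1
      have := (div_lt_iff₀ (by positivity : (0:ℝ) < d)).mpr h2
      linarith
    rw [hexact]
    rcases eq_or_ne (μ d) 0 with hμ | hμ
    · simp [hμ]
    rcases (moebius_ne_zero_iff_eq_or.mp hμ) with hμ1 | hμ1
    · rcases eq_or_ne d 1 with hd1 | hd1
      · subst hd1
        simp [hμ1]
      · rw [if_pos ⟨hμ1, hd1⟩, hμ1]
        push_cast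
        linarith
    · rw [hμ1, if_neg (by simp [hμ1])]
      push_cast
      linarith
  have hsum := Finset.sum_le_sum key
  rw [← hcount] at hsum
  rw [Finset.sum_sub_distrib] at hsum
  -- main term
  have hmain : ∑ d ∈ m.divisors, (μ d : ℝ) * ((m / d : ℕ) : ℝ) * n / m
      = (Nat.totient m : ℝ) / m * n := by
    rw [← Finset.sum_div, ← Finset.sum_mul]
    have : ∑ d ∈ m.divisors, (μ d : ℝ) * ((m / d : ℕ) : ℝ)
        = ((∑ d ∈ m.divisors, μ d * ((m / d : ℕ) : ℤ) : ℤ) : ℝ) := by push_cast; rfl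
    rw [this, tot_moeb m hm]
    push_cast
    ring
  -- error term
  have h1E : (1:ℕ) ∈ E := by
    simp [hEdef, Nat.mem_divisors, hm.ne', moebius_apply_one]
  have herr : ∑ d ∈ m.divisors, (if μ d = 1 ∧ d ≠ 1 then (1:ℝ) else 0)
      = (E.card : ℝ) - 1 := by
    rw [Finset.sum_boole]
    have hfe : m.divisors.filter (fun d => μ d = 1 ∧ d ≠ 1) = E.erase 1 := by
      ext d
      simp only [Finset.mem_filter, Finset.mem_erase, hEdef]
      tauto
    rw [hfe, Finset.card_erase_of_mem h1E]
    have : 1 ≤ E.card := Finset.card_pos.mpr ⟨1, h1E⟩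
    push_cast [this]
    ring
  rw [hmain, herr] at hsum
  -- bound E.card - 1 < sqrt n
  have hEsqrt : (E.card : ℝ) ≤ Real.sqrt n := by
    have h4 : (4:ℕ) ^ (k - 1) ≤ n := by
      calc (4:ℕ) ^ (k - 1) ≤ ∏ p ∈ m.primeFactors, p :=
            prod_primes_ge _ (fun p hp => Nat.prime_of_mem_primeFactors hp)
      _ ≤ m := Nat.le_of_dvd hm (Nat.prod_primeFactors_dvd m)
      _ ≤ n := hmn
    have h2k : ((2:ℝ) ^ (k - 1)) ≤ Real.sqrt n := by
      rw [show ((2:ℝ) ^ (k-1)) = Real.sqrt ((4:ℝ) ^ (k-1)) by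
        rw [show ((4:ℝ) ^ (k-1)) = ((2:ℝ) ^ (k-1))^2 by rw [← pow_mul, mul_comm, pow_mul]; norm_num]
        exact (Real.sqrt_sq (by positivity)).symm]
      apply Real.sqrt_le_sqrt
      exact_mod_cast h4
    calc (E.card : ℝ) ≤ ((2:ℕ) ^ (k - 1) : ℕ) := by exact_mod_cast card_moeb_one_le m hm
    _ = (2:ℝ) ^ (k-1) := by push_cast; ring
    _ ≤ Real.sqrt n := h2k
  have hs1 : (1:ℝ) ≤ Real.sqrt n := by
    rw [show (1:ℝ) = Real.sqrt 1 by simp]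
    exact Real.sqrt_le_sqrt (by exact_mod_cast hn)
  linarith


end Aux
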